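/- arXiv:1207.6960 — 2 statements merged into one kernel-verified Lean document; each statement's English description precedes it below -/
import Mathlib

section
/- For every class Γ_t with t > 1 and every vertex v_i ∈ Γ_t, the value ℓ(v_i) defined by the placing formula satisfies ℓ'(γ_{t−1}) < ℓ(v_i) ≤ ℓ'(γ_t). -/
/-- A unit interval representation of `G`: distinct vertices are adjacent iff their
points are at distance at most `1`. -/
def IsUIRep {V : Type*} (G : SimpleGraph V) (ℓ : V → ℝ) : Prop :=
  ∀ u v : V, u ≠ v → (G.Adj u v ↔ |ℓ u - ℓ v| ≤ 1)

/-- Two vertices are indistinguishable if they have the same closed neighborhood. -/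
def Indist {V : Type*} (G : SimpleGraph V) (u v : V) : Prop :=
  ∀ w : V, (w = u ∨ G.Adj u w) ↔ (w = v ∨ G.Adj v w)

/-- `GridRep G lt K lbound ℓ`: `ℓ` belongs to `Rep(G, <, ε, lbound)` for `ε = 1/K`,
i.e. it is an `ε`-grid unit interval representation of `G` whose left-to-right order
extends `lt` and which satisfies the lower bounds. -/
def GridRep {V : Type*} (G : SimpleGraph V) (lt : V → V → Prop) (K : ℕ) (lbound : V → ℝ)
    (ℓ : V → ℝ) : Prop :=
  IsUIRep G ℓ ∧ (∀ v : V, ∃ m : ℤ, ℓ v = m * (1 / (K : ℝ))) ∧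
    (∀ u v : V, lt u v → ℓ u ≤ ℓ v) ∧ (∀ v : V, lbound v ≤ ℓ v)

/-- The pruned graph on the indistinguishability classes `Γ 0 < Γ 1 < ⋯ < Γ (k-1)`:
two distinct classes are adjacent iff their vertices are adjacent in `G`. -/
def pruned {V : Type*} (G : SimpleGraph V) {k : ℕ} (Γ : Fin k → Set V) :
    SimpleGraph (Fin k) where
  Adj i j := i ≠ j ∧ ∃ u ∈ Γ i, ∃ w ∈ Γ j, G.Adj u w
  symm := by
    constructor
    rintro i j ⟨hij, u, hu, w, hw, h⟩
    exact ⟨hij.symm, w, hw, u, hu, h.symm⟩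
  loopless := by constructor; rintro i ⟨hii, -⟩; exact hii rfl

/-- `PlacingValue G' K ℓ' lb t x`: `x` is the value assigned by the placing formula
`x = max {lb, ℓ'(γ^t_←) + 1 + ε, ℓ'(γ^t_→) - 1}` to a vertex of the class `Γ t` with
lower bound `lb`, where `γ^t_←` is the largest class preceding `t` and non-adjacent to
`t` (the corresponding term being omitted if no such class exists) and `γ^t_→` is the
largest class adjacent to `t` (possibly `t` itself). -/
def PlacingValue {k : ℕ} (G' : SimpleGraph (Fin k)) (K : ℕ) (ℓ' : Fin k → ℝ)
    (lb : ℝ) (t : Fin k) (x : ℝ) : Prop :=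
  ∃ rA : Fin k, ((rA = t ∨ G'.Adj t rA) ∧ ∀ s : Fin k, (s = t ∨ G'.Adj t s) → s ≤ rA) ∧
    ((∃ lA : Fin k, (lA < t ∧ ¬ G'.Adj lA t ∧ ∀ s : Fin k, s < t → ¬ G'.Adj s t → s ≤ lA) ∧
        x = max (max lb (ℓ' lA + 1 + 1 / (K : ℝ))) (ℓ' rA - 1)) ∨
      ((∀ s : Fin k, s < t → G'.Adj s t) ∧ x = max lb (ℓ' rA - 1)))

lemma pruned_adj {V : Type*} (G : SimpleGraph V) {k : ℕ} (Γ : Fin k → Set V) (i j : Fin k) :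
    (pruned G Γ).Adj i j ↔ i ≠ j ∧ ∃ u ∈ Γ i, ∃ w ∈ Γ j, G.Adj u w := Iff.rfl

/-- for `t > 1`, the placing formula puts every vertex of the class
`Γ t` strictly to the right of `ℓ'(γ_{t-1})` and at most at `ℓ'(γ_t)`. -/
theorem stmt11 {V : Type*} [Fintype V] (G : SimpleGraph V)
    (hconn : G.Connected) (hUI : ∃ ℓ₀ : V → ℝ, IsUIRep G ℓ₀)
    (lt : V → V → Prop)
    (hirr : ∀ v : V, ¬ lt v v)
    (htrans : ∀ a b c : V, lt a b → lt b c → lt a c)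
    (hinc : ∀ u v : V, u ≠ v → (Indist G u v ↔ ¬ lt u v ∧ ¬ lt v u))
    (K : ℕ) (hK : 0 < K) (lbound : V → ℝ)
    (k : ℕ) (Γ : Fin k → Set V)
    (hne : ∀ i : Fin k, (Γ i).Nonempty)
    (hcover : ∀ v : V, ∃ i : Fin k, v ∈ Γ i)
    (hclass : ∀ i : Fin k, ∀ u ∈ Γ i, ∀ v : V, v ∈ Γ i ↔ Indist G u v)
    (horder : ∀ i j : Fin k, i < j → ∀ u ∈ Γ i, ∀ v ∈ Γ j, lt u v)
    (lbound' : Fin k → ℝ)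
    (hlb' : ∀ i : Fin k, IsGreatest (lbound '' Γ i) (lbound' i))
    (ℓ' : Fin k → ℝ) (hℓ' : GridRep (pruned G Γ) (· < ·) K lbound' ℓ')
    (t' t : Fin k) (ht : (t' : ℕ) + 1 = (t : ℕ))
    (v : V) (hv : v ∈ Γ t) (x : ℝ)
    (hx : PlacingValue (pruned G Γ) K ℓ' (lbound v) t x) :
    ℓ' t' < x ∧ x ≤ ℓ' t := by
  obtain ⟨hUI', hgrid, hmono, hlbd⟩ := hℓ'
  have hKR : (0:ℝ) < (K:ℝ) := by exact_mod_cast hK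
  have hKpos : (0:ℝ) < 1 / K := by positivity
  have hmono' : ∀ i j : Fin k, i ≤ j → ℓ' i ≤ ℓ' j := by
    intro i j h
    rcases h.lt_or_eq with h | h
    · exact hmono i j h
    · rw [h]
  have htlt : t' < t := by rw [Fin.lt_def]; omega
  have htne : t' ≠ t := ne_of_lt htlt
  -- disjointness of classes
  have hdisj : ∀ i j : Fin k, i ≠ j → ∀ w, w ∈ Γ i → w ∈ Γ j → False := by
    intro i j hij w hwi hwj
    rcases lt_or_gt_of_ne hij with h | h
    · exact hirr w (horder i j h w hwi w hwj)
    · exact hirr w (horder j i h w hwj w hwi)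
  have hsame : ∀ i : Fin k, ∀ u ∈ Γ i, ∀ w ∈ Γ i, Indist G u w :=
    fun i u hu w hw => (hclass i u hu w).mp hw
  have hindist_adj : ∀ u w : V, Indist G u w → u ≠ w → G.Adj u w := by
    intro u w h hne'
    rcases (h u).mp (Or.inl rfl) with h1 | h1
    · exact absurd h1 hne'
    · exact h1.symm
  have hcross : ∀ i j : Fin k, (pruned G Γ).Adj i j → ∀ u ∈ Γ i, ∀ w ∈ Γ j, G.Adj u w := by
    intro i j hadj u hu w hw
    rw [pruned_adj] at hadj
    obtain ⟨hij, u', hu', w', hw', hadj'⟩ := hadj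
    have h1 : G.Adj u w' := by
      rcases ((hsame i u' hu' u hu) w').mp (Or.inr hadj') with h | h
      · exact absurd hw' (fun hh => hdisj i j hij w' (h ▸ hu) hh)
      · exact h
    rcases ((hsame j w' hw' w hw) u).mp (Or.inr h1.symm) with h | h
    · exact absurd h (fun hh => hdisj i j hij u hu (hh ▸ hw))
    · exact h.symm
  -- t' and t are distinguishable in the pruned graph
  have hnotIndist : ¬ Indist (pruned G Γ) t' t := by
    intro hI
    obtain ⟨u, hu⟩ := hne t'
    have hone : ∀ (i j : Fin k), i ≠ j → Indist (pruned G Γ) i j →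
        ∀ u' ∈ Γ i, ∀ v' ∈ Γ j, ∀ w, (w = u' ∨ G.Adj u' w) → (w = v' ∨ G.Adj v' w) := by
      intro i j hij hI' u' hu' v' hv' w hw
      have hji : (pruned G Γ).Adj j i := by
        rcases (hI' j).mpr (Or.inl rfl) with h | h
        · exact absurd h hij.symm
        · exact h.symm
      obtain ⟨s, hws⟩ := hcover w
      rcases hw with rfl | hadj
      · exact Or.inr (hcross j i hji v' hv' w hu')
      · by_cases hsi : s = i
        · subst hsi
          exact Or.inr (hcross j s hji v' hv' w hws)
        · by_cases hsj : s = j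
          · subst hsj
            by_cases hwv : w = v'
            · exact Or.inl hwv
            · exact Or.inr (hindist_adj v' w (hsame s v' hv' w hws) (Ne.symm hwv))
          · have hadjis : (pruned G Γ).Adj i s :=
              (pruned_adj G Γ i s).mpr ⟨fun h => hsi h.symm, u', hu', w, hws, hadj⟩
            rcases (hI' s).mp (Or.inr hadjis) with h | h
            · exact absurd h hsj
            · exact Or.inr (hcross j s h v' hv' w hws)
    have hd1 := hone t' t htne hI u hu v hv
    have hd2 := hone t t' htne.symm (fun z => (hI z).symm) v hv u hu
    have hIuv : Indist G u v := fun w => ⟨hd1 w, hd2 w⟩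
    exact hdisj t' t htne v ((hclass t' u hu v).mpr hIuv) hv
  -- upper bound helpers
  have hlbv : lbound v ≤ ℓ' t := le_trans ((hlb' t).2 ⟨v, hv, rfl⟩) (hlbd t)
  have hadjbound : ∀ s : Fin k, (s = t ∨ (pruned G Γ).Adj t s) → ℓ' s - 1 ≤ ℓ' t := by
    intro s h
    rcases h with rfl | h
    · linarith
    · have := abs_le.mp ((hUI' t s h.ne).mp h)
      linarith [this.1]
  have hnonadj_bound : ∀ s : Fin k, s < t → ¬ (pruned G Γ).Adj s t →
      ℓ' s + 1 + 1 / K ≤ ℓ' t := by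
    intro s hs hna
    have hle := hmono s t hs
    have habs : ¬ |ℓ' s - ℓ' t| ≤ 1 := fun h => hna ((hUI' s t (ne_of_lt hs)).mpr h)
    have h1 : 1 < ℓ' t - ℓ' s := by
      rw [abs_sub_comm, abs_of_nonneg (by linarith)] at habs
      linarith [not_le.mp habs]
    obtain ⟨a, ha⟩ := hgrid s
    obtain ⟨b, hb⟩ := hgrid t
    have h2 : (K:ℝ) < ((b - a : ℤ) : ℝ) := by
      rw [ha, hb] at h1
      have h2' : (1:ℝ) < ((b - a : ℤ) : ℝ) * (1 / K) := by push_cast; linarith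
      rw [mul_one_div] at h2'
      exact (one_lt_div hKR).mp h2'
    have h3 : (K:ℤ) + 1 ≤ b - a := by exact_mod_cast h2
    have h4 : ((K:ℝ) + 1) * (1 / K) ≤ ((b - a : ℤ) : ℝ) * (1 / K) := by
      apply mul_le_mul_of_nonneg_right _ (le_of_lt hKpos)
      exact_mod_cast h3
    have h5 : ((K:ℝ) + 1) * (1 / K) = 1 + 1 / K := by field_simp
    rw [ha, hb]
    push_cast at h4 ⊢
    linarith
  obtain ⟨rA, ⟨hrA1, hrA2⟩, hcase⟩ := hx
  have hrAge : t ≤ rA := hrA2 t (Or.inl rfl)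
  have hrAbound : ℓ' rA - 1 ≤ ℓ' t := hadjbound rA hrA1
  constructor
  · -- lower bound
    by_cases hat : (pruned G Γ).Adj t' t
    · -- t' adjacent to t: use a distinguishing class
      obtain ⟨w, hw⟩ := not_forall.mp hnotIndist
      have hdis : ((w = t' ∨ (pruned G Γ).Adj t' w) ∧ ¬(w = t ∨ (pruned G Γ).Adj t w)) ∨
          (¬(w = t' ∨ (pruned G Γ).Adj t' w) ∧ (w = t ∨ (pruned G Γ).Adj t w)) := by
        tauto
      have hmt : ℓ' t' ≤ ℓ' t := hmono t' t htlt
      rcases hdis with ⟨hL, hR⟩ | ⟨hL, hR⟩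
      · push_neg at hR
        have hwt' : (pruned G Γ).Adj t' w := by
          rcases hL with rfl | h
          · exact absurd hat.symm hR.2
          · exact h
        have h1 := abs_le.mp ((hUI' t' w hwt'.ne).mp hwt')
        have h2 : ¬ |ℓ' t - ℓ' w| ≤ 1 :=
          fun h => hR.2 ((hUI' t w (Ne.symm hR.1)).mpr h)
        have h3 : ℓ' w < ℓ' t - 1 := by
          rcases lt_abs.mp (not_le.mp h2) with h | h
          · linarith
          · linarith
        have hwlt : w < t := by
          by_contra hcon
          push_neg at hcon
          linarith [hmono' t w hcon]
        rcases hcase with ⟨lA, ⟨hlA1, hlA2, hlA3⟩, hxeq⟩ | ⟨hall, hxeq⟩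
        · have hwlA : w ≤ lA := hlA3 w hwlt (fun h => hR.2 h.symm)
          have h5 : ℓ' t' < ℓ' lA + 1 + 1 / K := by
            linarith [hmono' w lA hwlA, h1.2, hKpos]
          rw [hxeq]
          exact lt_of_lt_of_le h5 (le_trans (le_max_right _ _) (le_max_left _ _))
        · exact absurd (hall w hwlt).symm hR.2
      · push_neg at hL
        have hwt : (pruned G Γ).Adj t w := by
          rcases hR with rfl | h
          · exact absurd hat hL.2
          · exact h
        have h1 := abs_le.mp ((hUI' t w hwt.ne).mp hwt)
        have h2 : ¬ |ℓ' t' - ℓ' w| ≤ 1 :=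
          fun h => hL.2 ((hUI' t' w (Ne.symm hL.1)).mpr h)
        have h3 : ℓ' t' + 1 < ℓ' w := by
          rcases lt_abs.mp (not_le.mp h2) with h | h
          · linarith
          · linarith
        have hwrA : w ≤ rA := hrA2 w (Or.inr hwt)
        have h4 : ℓ' t' < ℓ' rA - 1 := by linarith [hmono' w rA hwrA]
        rcases hcase with ⟨_, _, hxeq⟩ | ⟨_, hxeq⟩ <;> rw [hxeq] <;>
          exact lt_of_lt_of_le h4 (le_max_right _ _)
    · rcases hcase with ⟨lA, ⟨hlA1, hlA2, hlA3⟩, hxeq⟩ | ⟨hall, hxeq⟩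
      · have h1 : t' ≤ lA := hlA3 t' htlt hat
        have h2 : ℓ' t' < ℓ' lA + 1 + 1 / K := by linarith [hmono' t' lA h1, hKpos]
        rw [hxeq]
        exact lt_of_lt_of_le h2 (le_trans (le_max_right _ _) (le_max_left _ _))
      · exact absurd (hall t' htlt) hat
  · -- upper bound
    rcases hcase with ⟨lA, ⟨hlA1, hlA2, hlA3⟩, hxeq⟩ | ⟨hall, hxeq⟩
    · rw [hxeq]
      exact max_le (max_le hlbv (hnonadj_bound lA hlA1 hlA2)) hrAbound
    · rw [hxeq]
      exact max_le hlbv hrAbound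
end

section
/- Assume every value of lbound is an integer multiple of ε and that Rep(G', <, ε, lbound) is nonempty, and let ℓ' be its left-most representation (the element that is pointwise minimal). Then the function ℓ on V(G) defined by the placing formula is an ε-grid unit interval representation of G, belongs to Rep(G, <, ε, lbound), and is the left-most representation of Rep(G, <, ε, lbound): ℓ ≤ ℓ'' pointwise for every ℓ'' ∈ Rep(G, <, ε, lbound). -/
/-- On the `1/K`-grid, a gap larger than `1` is at least `1 + 1/K`. -/
lemma gridGap {K : ℕ} (hK : 0 < K) {x y : ℝ}
    (hx : ∃ m : ℤ, x = m * (1 / (K : ℝ))) (hy : ∃ m : ℤ, y = m * (1 / (K : ℝ)))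
    (h : 1 < y - x) : 1 + 1 / (K : ℝ) ≤ y - x := by
  obtain ⟨m, rfl⟩ := hx
  obtain ⟨n, rfl⟩ := hy
  have hK0 : (0 : ℝ) < (K : ℝ) := by exact_mod_cast hK
  have hsub : (n : ℝ) * (1 / (K : ℝ)) - (m : ℝ) * (1 / (K : ℝ))
      = ((n - m : ℤ) : ℝ) * (1 / (K : ℝ)) := by push_cast; ring
  rw [hsub] at h ⊢
  rw [mul_one_div] at h
  rw [lt_div_iff₀ hK0, one_mul] at h
  have h1 : (K : ℤ) < n - m := by exact_mod_cast h
  have h2 : ((K : ℤ) : ℝ) + 1 ≤ ((n - m : ℤ) : ℝ) := by exact_mod_cast h1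
  rw [mul_one_div, le_div_iff₀ hK0]
  have he : (1 + 1 / (K : ℝ)) * (K : ℝ) = (K : ℝ) + 1 := by field_simp
  rw [he]
  push_cast at h2 ⊢
  linarith

/-- if all lower bounds lie on the `ε`-grid and `ℓ'` is the left-most
representation of the pruned graph, then the placing formula yields the left-most
representation of `Rep(G, <, ε, lbound)`. -/
theorem stmt12 {V : Type*} [Fintype V] (G : SimpleGraph V)
    (hconn : G.Connected) (hUI : ∃ ℓ₀ : V → ℝ, IsUIRep G ℓ₀)
    (lt : V → V → Prop)
    (hirr : ∀ v : V, ¬ lt v v)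
    (htrans : ∀ a b c : V, lt a b → lt b c → lt a c)
    (hinc : ∀ u v : V, u ≠ v → (Indist G u v ↔ ¬ lt u v ∧ ¬ lt v u))
    (K : ℕ) (hK : 0 < K) (lbound : V → ℝ)
    (k : ℕ) (Γ : Fin k → Set V)
    (hne : ∀ i : Fin k, (Γ i).Nonempty)
    (hcover : ∀ v : V, ∃ i : Fin k, v ∈ Γ i)
    (hclass : ∀ i : Fin k, ∀ u ∈ Γ i, ∀ v : V, v ∈ Γ i ↔ Indist G u v)
    (horder : ∀ i j : Fin k, i < j → ∀ u ∈ Γ i, ∀ v ∈ Γ j, lt u v)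
    (lbound' : Fin k → ℝ)
    (hlb' : ∀ i : Fin k, IsGreatest (lbound '' Γ i) (lbound' i))
    (hgridlb : ∀ v : V, ∃ m : ℤ, lbound v = m * (1 / (K : ℝ)))
    (ℓ' : Fin k → ℝ) (hℓ' : GridRep (pruned G Γ) (· < ·) K lbound' ℓ')
    (hmin' : ∀ ℓ'' : Fin k → ℝ, GridRep (pruned G Γ) (· < ·) K lbound' ℓ'' →
      ∀ i : Fin k, ℓ' i ≤ ℓ'' i)
    (ℓ : V → ℝ)
    (hplace : ∀ t : Fin k, ∀ v ∈ Γ t, PlacingValue (pruned G Γ) K ℓ' (lbound v) t (ℓ v)) :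
    GridRep G lt K lbound ℓ ∧
      ∀ ℓ'' : V → ℝ, GridRep G lt K lbound ℓ'' → ∀ v : V, ℓ v ≤ ℓ'' v := by
  classical
  obtain ⟨hrep', hgrid', hmono', hlbd'⟩ := hℓ'
  have hK0 : (0 : ℝ) < (K : ℝ) := by exact_mod_cast hK
  have hε : (0 : ℝ) < 1 / (K : ℝ) := by positivity
  choose cls hcls using hcover
  -- classes are pairwise disjoint
  have hdisj : ∀ i j : Fin k, i ≠ j → ∀ v : V, v ∈ Γ i → v ∈ Γ j → False := by
    intro i j hij v hvi hvj
    rcases lt_or_gt_of_ne hij with h | h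
    · exact hirr v (horder i j h v hvi v hvj)
    · exact hirr v (horder j i h v hvj v hvi)
  -- distinct vertices of the same class are adjacent
  have hsame : ∀ i : Fin k, ∀ u ∈ Γ i, ∀ v ∈ Γ i, u ≠ v → G.Adj u v := by
    intro i u hu v hv huv
    have hind := (hclass i u hu v).mp hv
    rcases (hind u).mp (Or.inl rfl) with h | h
    · exact absurd h huv
    · exact h.symm
  -- adjacency between classes propagates to all cross pairs
  have hcross : ∀ i j : Fin k, (pruned G Γ).Adj i j →
      ∀ u ∈ Γ i, ∀ v ∈ Γ j, G.Adj u v := by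
    rintro i j ⟨hij, u0, hu0, v0, hv0, hadj⟩ u hu v hv
    have h1 : v0 = u ∨ G.Adj u v0 :=
      ((hclass i u0 hu0 u).mp hu v0).mp (Or.inr hadj)
    have h2 : G.Adj u v0 := by
      rcases h1 with he | h
      · subst he; exact (hdisj i j hij v0 hu hv0).elim
      · exact h
    have h4 : u = v ∨ G.Adj v u :=
      ((hclass j v0 hv0 v).mp hv u).mp (Or.inr h2.symm)
    rcases h4 with he | h
    · subst he; exact (hdisj i j hij u hu hv).elim
    · exact h.symm
  have hncross : ∀ i j : Fin k, i ≠ j → ¬ (pruned G Γ).Adj i j →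
      ∀ u ∈ Γ i, ∀ v ∈ Γ j, ¬ G.Adj u v := by
    intro i j hij hna u hu v hv hadj
    exact hna ⟨hij, u, hu, v, hv, hadj⟩
  -- facts about ℓ'
  have hmle : ∀ i j : Fin k, i ≤ j → ℓ' i ≤ ℓ' j := by
    intro i j h
    rcases eq_or_lt_of_le h with rfl | h
    · exact le_refl _
    · exact hmono' i j h
  have habs' : ∀ i j : Fin k, (pruned G Γ).Adj i j → |ℓ' i - ℓ' j| ≤ 1 :=
    fun i j h => (hrep' i j h.ne).mp h
  have hgap : ∀ i j : Fin k, i < j → ¬ (pruned G Γ).Adj i j →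
      ℓ' i + 1 + 1 / (K : ℝ) ≤ ℓ' j := by
    intro i j hij hna
    have h2 : ℓ' i ≤ ℓ' j := hmono' i j hij
    have h3 : 1 < ℓ' j - ℓ' i := by
      by_contra hcon
      push_neg at hcon
      exact (fun h => hna ((hrep' i j hij.ne).mpr h))
        (abs_le.mpr ⟨by linarith, by linarith⟩)
    have := gridGap hK (hgrid' i) (hgrid' j) h3
    linarith
  have hlbmem : ∀ i : Fin k, ∀ v ∈ Γ i, lbound v ≤ lbound' i :=
    fun i v hv => (hlb' i).2 ⟨v, hv, rfl⟩
  -- per-vertex consequences of the placing formula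
  have hvlb : ∀ v : V, lbound v ≤ ℓ v := by
    intro v
    obtain ⟨rA, ⟨hrm, hrmax⟩, hbr⟩ := hplace (cls v) v (hcls v)
    rcases hbr with ⟨lA, _, heq⟩ | ⟨_, heq⟩
    · rw [heq]; exact le_trans (le_max_left _ _) (le_max_left _ _)
    · rw [heq]; exact le_max_left _ _
  have hvU : ∀ t : Fin k, ∀ v ∈ Γ t, ℓ v ≤ ℓ' t := by
    intro t v hv
    obtain ⟨rA, ⟨hrm, hrmax⟩, hbr⟩ := hplace t v hv
    have hlbt : lbound v ≤ ℓ' t := le_trans (hlbmem t v hv) (hlbd' t)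
    have hr : ℓ' rA - 1 ≤ ℓ' t := by
      rcases hrm with rfl | hadj
      · linarith
      · have h := habs' t rA hadj
        rw [abs_le] at h
        linarith [h.1]
    rcases hbr with ⟨lA, ⟨hlt', hlnadj, _⟩, heq⟩ | ⟨_, heq⟩
    · have hl : ℓ' lA + 1 + 1 / (K : ℝ) ≤ ℓ' t := hgap lA t hlt' hlnadj
      rw [heq]; exact max_le (max_le hlbt hl) hr
    · rw [heq]; exact max_le hlbt hr
  have hvR : ∀ t : Fin k, ∀ v ∈ Γ t, ∀ r : Fin k,
      (r = t ∨ (pruned G Γ).Adj t r) → ℓ' r - 1 ≤ ℓ v := by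
    intro t v hv r hr
    obtain ⟨rA, ⟨hrm, hrmax⟩, hbr⟩ := hplace t v hv
    have h2 : ℓ' r ≤ ℓ' rA := hmle r rA (hrmax r hr)
    rcases hbr with ⟨_, _, heq⟩ | ⟨_, heq⟩ <;> rw [heq] <;>
      exact le_trans (by linarith) (le_max_right _ _)
  have hvL : ∀ t : Fin k, ∀ v ∈ Γ t, ℓ' t - 1 ≤ ℓ v :=
    fun t v hv => hvR t v hv t (Or.inl rfl)
  have hvLA : ∀ t : Fin k, ∀ v ∈ Γ t, ∀ s : Fin k, s < t → ¬ (pruned G Γ).Adj s t →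
      ℓ' s + 1 + 1 / (K : ℝ) ≤ ℓ v := by
    intro t v hv s hst hna
    obtain ⟨rA, ⟨hrm, hrmax⟩, hbr⟩ := hplace t v hv
    rcases hbr with ⟨lA, ⟨hlt', hlnadj, hlmax⟩, heq⟩ | ⟨hall, _⟩
    · have h2 : ℓ' s ≤ ℓ' lA := hmle s lA (hlmax s hst hna)
      rw [heq]
      exact le_trans (by linarith) (le_trans (le_max_right _ _) (le_max_left _ _))
    · exact absurd (hall s hst) hna
  -- translating closed neighbourhoods to the pruned graph
  have hNbhd : ∀ i : Fin k, ∀ u ∈ Γ i, ∀ (x : V) (r : Fin k), x ∈ Γ r →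
      ((x = u ∨ G.Adj u x) ↔ (r = i ∨ (pruned G Γ).Adj i r)) := by
    intro i u hu x r hx
    constructor
    · rintro (rfl | hadj)
      · left
        by_contra hri
        exact hdisj r i hri x hx hu
      · by_cases hri : r = i
        · exact Or.inl hri
        · exact Or.inr ⟨fun h => hri h.symm, u, hu, x, hx, hadj⟩
    · rintro (rfl | hadj)
      · by_cases hxu : x = u
        · exact Or.inl hxu
        · exact Or.inr (hsame r u hu x hx (fun h => hxu h.symm))
      · exact Or.inr (hcross i r hadj u hu x hx)
  -- distinct classes are distinguishable in the pruned graph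
  have hdist : ∀ i j : Fin k, i ≠ j →
      ∃ r : Fin k, ¬((r = i ∨ (pruned G Γ).Adj i r) ↔ (r = j ∨ (pruned G Γ).Adj j r)) := by
    intro i j hij
    obtain ⟨u, hu⟩ := hne i
    obtain ⟨v, hv⟩ := hne j
    have hvnot : v ∉ Γ i := fun h => hdisj i j hij v h hv
    have hnind : ¬ Indist G u v := fun h => hvnot ((hclass i u hu v).mpr h)
    have hnind' : ¬ ∀ x : V, ((x = u ∨ G.Adj u x) ↔ (x = v ∨ G.Adj v x)) := hnind
    obtain ⟨x, hx⟩ := not_forall.mp hnind'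
    refine ⟨cls x, fun hiff => hx ?_⟩
    exact (hNbhd i u hu x (cls x) (hcls x)).trans
      (hiff.trans (hNbhd j v hv x (cls x) (hcls x)).symm)
  -- Claim C: if s < t are adjacent classes, then ℓ' s ≤ ℓ v for every v ∈ Γ t
  have claimC : ∀ s t : Fin k, s < t → (pruned G Γ).Adj s t →
      ∀ v ∈ Γ t, ℓ' s ≤ ℓ v := by
    intro s t hst hadj v hv
    obtain ⟨r, hr⟩ := hdist s t hst.ne
    by_cases hPs : r = s ∨ (pruned G Γ).Adj s r
    · have hPt : ¬(r = t ∨ (pruned G Γ).Adj t r) := fun h => hr (iff_of_true hPs h)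
      push_neg at hPt
      obtain ⟨hrt, hnat⟩ := hPt
      have hrs : (pruned G Γ).Adj s r := by
        rcases hPs with rfl | h
        · exact absurd hadj.symm hnat
        · exact h
      have hrlt : r < t := by
        rcases lt_trichotomy r t with h | h | h
        · exact h
        · exact absurd h hrt
        · exfalso
          have h1 := habs' s r hrs
          have h2 : ℓ' t + 1 + 1 / (K : ℝ) ≤ ℓ' r := hgap t r h hnat
          have h3 : ℓ' s ≤ ℓ' t := hmono' s t hst
          rw [abs_le] at h1
          linarith [h1.1, h1.2]
      have h4 : ¬ (pruned G Γ).Adj r t := fun ha => hnat ha.symm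
      have h5 := hvLA t v hv r hrlt h4
      have h1 := habs' s r hrs
      rw [abs_le] at h1
      linarith [h1.2]
    · have hPt : r = t ∨ (pruned G Γ).Adj t r := by
        by_contra h
        exact hr (iff_of_false hPs h)
      push_neg at hPs
      obtain ⟨hrsne, hnas⟩ := hPs
      have hrt : (pruned G Γ).Adj t r := by
        rcases hPt with rfl | h
        · exact absurd hadj hnas
        · exact h
      rcases lt_trichotomy r s with h | h | h
      · exfalso
        have h1 := habs' t r hrt
        have h2 : ℓ' r + 1 + 1 / (K : ℝ) ≤ ℓ' s := hgap r s h (fun ha => hnas ha.symm)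
        have h3 : ℓ' s ≤ ℓ' t := hmono' s t hst
        rw [abs_le] at h1
        linarith [h1.1, h1.2]
      · exact absurd h hrsne
      · rcases lt_trichotomy r t with h' | h' | h'
        · have h2 : ℓ' s + 1 + 1 / (K : ℝ) ≤ ℓ' r := hgap s r h hnas
          have h3 : ℓ' r ≤ ℓ' t := hmono' r t h'
          have h4 := hvL t v hv
          linarith
        · exfalso; subst h'; exact hrt.ne rfl
        · have h5 := hvR t v hv r (Or.inr hrt)
          have h2 : ℓ' s + 1 + 1 / (K : ℝ) ≤ ℓ' r := hgap s r h hnas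
          linarith
  -- monotonicity of ℓ across classes
  have hmonoC : ∀ s t : Fin k, s < t → ∀ u ∈ Γ s, ∀ v ∈ Γ t, ℓ u ≤ ℓ v := by
    intro s t hst u hu v hv
    have h1 := hvU s u hu
    by_cases hadj : (pruned G Γ).Adj s t
    · exact le_trans h1 (claimC s t hst hadj v hv)
    · have h2 := hvLA t v hv s hst hadj
      linarith
  -- the key adjacency equivalence for distinct classes
  have hkey : ∀ s t : Fin k, s < t → ∀ u ∈ Γ s, ∀ v ∈ Γ t,
      (G.Adj u v ↔ |ℓ u - ℓ v| ≤ 1) := by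
    intro s t hst u hu v hv
    by_cases hadj : (pruned G Γ).Adj s t
    · refine iff_of_true (hcross s t hadj u hu v hv) ?_
      have h1 := hvU t v hv
      have h2 := hvR s u hu t (Or.inr hadj)
      have h3 := hvU s u hu
      have h4 := claimC s t hst hadj v hv
      rw [abs_le]; constructor <;> linarith
    · refine iff_of_false (hncross s t hst.ne hadj u hu v hv) ?_
      have h2 := hvLA t v hv s hst hadj
      have h3 := hvU s u hu
      intro hcon
      rw [abs_le] at hcon
      linarith [hcon.1]
  have huirep : IsUIRep G ℓ := by
    intro u v huv
    rcases lt_trichotomy (cls u) (cls v) with h | h | h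
    · exact hkey _ _ h u (hcls u) v (hcls v)
    · have hu' := hcls u
      have hv' : v ∈ Γ (cls u) := by rw [h]; exact hcls v
      refine iff_of_true (hsame _ u hu' v hv' huv) ?_
      have h1 := hvU _ u hu'
      have h2 := hvU _ v hv'
      have h3 := hvL _ u hu'
      have h4 := hvL _ v hv'
      rw [abs_le]; constructor <;> linarith
    · have hiff := hkey _ _ h v (hcls v) u (hcls u)
      rw [G.adj_comm, abs_sub_comm]
      exact hiff
  -- ℓ lies on the grid
  have hmaxgrid : ∀ x y : ℝ, (∃ m : ℤ, x = m * (1 / (K : ℝ))) →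
      (∃ m : ℤ, y = m * (1 / (K : ℝ))) → ∃ m : ℤ, max x y = m * (1 / (K : ℝ)) := by
    rintro x y ⟨a, ha⟩ ⟨b, hb⟩
    rcases le_total x y with h | h
    · exact ⟨b, by rw [max_eq_right h, hb]⟩
    · exact ⟨a, by rw [max_eq_left h, ha]⟩
  have hKK : (K : ℝ) * (1 / (K : ℝ)) = 1 := by field_simp
  have hgridν : ∀ v : V, ∃ m : ℤ, ℓ v = m * (1 / (K : ℝ)) := by
    intro v
    obtain ⟨rA, ⟨hrm, hrmax⟩, hbr⟩ := hplace (cls v) v (hcls v)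
    obtain ⟨mr, hmr⟩ := hgrid' rA
    have hrterm : ∃ m : ℤ, ℓ' rA - 1 = m * (1 / (K : ℝ)) := by
      refine ⟨mr - (K : ℤ), ?_⟩
      push_cast
      rw [sub_mul, hKK, ← hmr]
    rcases hbr with ⟨lA, _, heq⟩ | ⟨_, heq⟩
    · obtain ⟨ml, hml⟩ := hgrid' lA
      have hlterm : ∃ m : ℤ, ℓ' lA + 1 + 1 / (K : ℝ) = m * (1 / (K : ℝ)) := by
        refine ⟨ml + (K : ℤ) + 1, ?_⟩
        push_cast
        rw [add_mul, add_mul, hKK, one_mul, ← hml]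
      rw [heq]
      exact hmaxgrid _ _ (hmaxgrid _ _ (hgridlb v) hlterm) hrterm
    · rw [heq]
      exact hmaxgrid _ _ (hgridlb v) hrterm
  -- order compatibility
  have hltcls : ∀ u v : V, lt u v → cls u < cls v := by
    intro u v hlt'
    have huv : u ≠ v := fun h => hirr v (h ▸ hlt')
    have hnecls : cls u ≠ cls v := by
      intro h
      have hv' : v ∈ Γ (cls u) := by rw [h]; exact hcls v
      have hind := (hclass (cls u) u (hcls u) v).mp hv'
      exact ((hinc u v huv).mp hind).1 hlt'
    rcases lt_or_gt_of_ne hnecls with h | h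
    · exact h
    · exact absurd
        (htrans u v u hlt' (horder (cls v) (cls u) h v (hcls v) u (hcls u))) (hirr u)
  refine ⟨⟨huirep, hgridν,
      fun u v hlt' => hmonoC _ _ (hltcls u v hlt') u (hcls u) v (hcls v), hvlb⟩, ?_⟩
  -- minimality
  rintro ℓ'' ⟨hrep'', hgrid'', hord'', hlb''⟩ v
  have hmaxex : ∀ i : Fin k, ∃ w ∈ Γ i, ∀ x ∈ Γ i, ℓ'' x ≤ ℓ'' w := by
    intro i
    obtain ⟨w, hw1, hw2⟩ := Set.exists_max_image (Γ i) ℓ'' (Set.toFinite _) (hne i)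
    exact ⟨w, hw1, hw2⟩
  choose w hwmem hwmax using hmaxex
  have hzex : ∀ i : Fin k, ∃ z ∈ Γ i, lbound z = lbound' i := by
    intro i
    obtain ⟨z, hz, hzeq⟩ := (hlb' i).1
    exact ⟨z, hz, hzeq⟩
  choose z hzmem hzeq using hzex
  have hwne : ∀ i j : Fin k, i ≠ j → w i ≠ w j := by
    intro i j hij h
    exact hdisj i j hij (w i) (hwmem i) (by rw [h]; exact hwmem j)
  have hL3 : GridRep (pruned G Γ) (· < ·) K lbound' (fun i => ℓ'' (w i)) := by
    refine ⟨?_, fun i => hgrid'' (w i),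
      fun i j hij => hord'' _ _ (horder i j hij _ (hwmem i) _ (hwmem j)), fun i => ?_⟩
    · intro i j hij
      constructor
      · intro hadj
        exact (hrep'' _ _ (hwne i j hij)).mp (hcross i j hadj (w i) (hwmem i) (w j) (hwmem j))
      · intro habs
        by_contra hna
        exact hncross i j hij hna (w i) (hwmem i) (w j) (hwmem j)
          ((hrep'' _ _ (hwne i j hij)).mpr habs)
    · calc lbound' i = lbound (z i) := (hzeq i).symm
        _ ≤ ℓ'' (z i) := hlb'' (z i)
        _ ≤ ℓ'' (w i) := hwmax i (z i) (hzmem i)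
  have hm := hmin' _ hL3
  obtain ⟨rA, ⟨hrm, hrmax⟩, hbr⟩ := hplace (cls v) v (hcls v)
  have hrbound : ℓ' rA - 1 ≤ ℓ'' v := by
    have h1 : ℓ' rA ≤ ℓ'' (w rA) := hm rA
    rcases hrm with heqr | hadj
    · by_cases hwv : w rA = v
      · rw [hwv] at h1; linarith
      · have hmemr : w rA ∈ Γ (cls v) := by rw [← heqr]; exact hwmem rA
        have hadjv : G.Adj (w rA) v := hsame (cls v) (w rA) hmemr v (hcls v) hwv
        have h2 := (hrep'' _ _ hwv).mp hadjv
        rw [abs_le] at h2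
        linarith [h2.2]
    · have hadjv : G.Adj v (w rA) := hcross (cls v) rA hadj v (hcls v) (w rA) (hwmem rA)
      have h2 := (hrep'' _ _ hadjv.ne).mp hadjv
      rw [abs_le] at h2
      linarith [h2.1]
  rcases hbr with ⟨lA, ⟨hlt', hlnadj, _⟩, heq⟩ | ⟨_, heq⟩
  · have hlbound : ℓ' lA + 1 + 1 / (K : ℝ) ≤ ℓ'' v := by
      have h1 : ℓ' lA ≤ ℓ'' (w lA) := hm lA
      have hnadj : ¬ G.Adj (w lA) v :=
        hncross lA (cls v) hlt'.ne hlnadj (w lA) (hwmem lA) v (hcls v)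
      have hne'' : w lA ≠ v := fun h =>
        hdisj lA (cls v) hlt'.ne (w lA) (hwmem lA) (by rw [h]; exact hcls v)
      have hord : ℓ'' (w lA) ≤ ℓ'' v :=
        hord'' _ _ (horder lA (cls v) hlt' (w lA) (hwmem lA) v (hcls v))
      have hgt : 1 < ℓ'' v - ℓ'' (w lA) := by
        by_contra hcon
        push_neg at hcon
        exact hnadj ((hrep'' _ _ hne'').mpr (abs_le.mpr ⟨by linarith, by linarith⟩))
      have := gridGap hK (hgrid'' (w lA)) (hgrid'' v) hgt
      linarith
    rw [heq]
    exact max_le (max_le (hlb'' v) hlbound) hrbound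
  · rw [heq]
    exact max_le (hlb'' v) hrbound
end
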